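/- In the 3-SAT reduction, the map from a 3-CNF formula with n variables and m clauses to the 2-IEV instance (matrices C_1, ..., C_{m+1} over GF(2) with N = n+1 columns, where C_i spans the orthogonal complement of the row space of B_i) preserves and reflects solutions: the formula is satisfiable iff there exists v ∈ GF(2)^{n+1} not in the row space of any C_i. -/

import Mathlib

/-- A literal over variables `x_1, …, x_n`: a variable index and a negation flag. -/
structure Lit (n : ℕ) where
  var : Fin n
  neg : Bool

/-- The row of `GF(2)^{n+1}` encoding a literal: `e_k` for `x_k`,
and `e_k + e_{n+1}` for `¬x_k`. -/
def litRow {n : ℕ} (l : Lit n) : Fin (n + 1) → ZMod 2 :=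
  (fun j => if j = l.var.castSucc then 1 else 0) +
  (fun j => if l.neg = true ∧ j = Fin.last n then 1 else 0)

/-- The `3 × (n+1)` matrix `B_i` over `GF(2)` encoding a 3-literal clause. -/
def clauseMatrix {n : ℕ} (cl : Fin 3 → Lit n) : Matrix (Fin 3) (Fin (n + 1)) (ZMod 2) :=
  Matrix.of fun j k => litRow (cl j) k

/-- The `1 × (n+1)` matrix `B_{m+1} = [0 … 0 1]`. -/
def lastMatrix (n : ℕ) : Matrix (Fin 1) (Fin (n + 1)) (ZMod 2) :=
  Matrix.of fun _ k => if k = Fin.last n then 1 else 0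

/-- An assignment satisfies a literal iff the variable's value differs from the negation flag. -/
def litSat {n : ℕ} (a : Fin n → Bool) (l : Lit n) : Prop := a l.var ≠ l.neg

/-- The row space of the `i`-th clause matrix (for `i ≤ m-1`), or of `B_{m+1}` (for `i = m`). -/
def Bspan {n m : ℕ} (φ : Fin m → Fin 3 → Lit n) (i : Fin (m + 1)) :
    Submodule (ZMod 2) (Fin (n + 1) → ZMod 2) :=
  if h : (i : ℕ) < m then Submodule.span (ZMod 2) (Set.range (clauseMatrix (φ ⟨i, h⟩)))
  else Submodule.span (ZMod 2) (Set.range (lastMatrix n))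


lemma zmod2_ne_zero (x : ZMod 2) : x ≠ 0 ↔ x = 1 := by revert x; decide

lemma dp_indicator {N : ℕ} (v : Fin N → ZMod 2) (k : Fin N) :
    dotProduct v (fun j => if j = k then 1 else 0) = v k := by
  simp [dotProduct, mul_ite]

lemma exists_row {k N : ℕ} (M : Matrix (Fin k) (Fin N) (ZMod 2)) (v : Fin N → ZMod 2) :
    (∃ w ∈ Submodule.span (ZMod 2) (Set.range M), dotProduct v w ≠ 0) ↔
      ∃ j, dotProduct v (M j) ≠ 0 := by
  constructor
  · rintro ⟨w, hw, hne⟩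
    by_contra h
    push_neg at h
    have key : ∀ x ∈ Submodule.span (ZMod 2) (Set.range M), dotProduct v x = 0 := by
      intro x hx
      induction hx using Submodule.span_induction with
      | mem y hy => obtain ⟨j, rfl⟩ := hy; exact h j
      | zero => simp
      | add y z _ _ hy hz => simp [dotProduct_add, hy, hz]
      | smul c y _ hy => simp [dotProduct_smul, hy]
    exact hne (key w hw)
  · rintro ⟨j, hj⟩
    exact ⟨M j, Submodule.subset_span ⟨j, rfl⟩, hj⟩

lemma dp_litRow {n : ℕ} (v : Fin (n + 1) → ZMod 2) (l : Lit n) :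
    dotProduct v (litRow l) =
      v l.var.castSucc + (if l.neg then v (Fin.last n) else 0) := by
  unfold litRow
  rw [dotProduct_add, dp_indicator]
  cases hn : l.neg <;> simp [hn, dp_indicator, dotProduct]
theorem stmt_19 {n m : ℕ} (φ : Fin m → Fin 3 → Lit n) (p : Fin (m + 1) → ℕ)
    (C : (i : Fin (m + 1)) → Matrix (Fin (p i)) (Fin (n + 1)) (ZMod 2))
    (hC : ∀ i (u : Fin (n + 1) → ZMod 2),
      u ∈ Submodule.span (ZMod 2) (Set.range (C i)) ↔
        ∀ w ∈ Bspan φ i, dotProduct u w = 0) :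
    (∃ a : Fin n → Bool, ∀ i, ∃ j, litSat a (φ i j)) ↔
    (∃ v : Fin (n + 1) → ZMod 2, ∀ i, v ∉ Submodule.span (ZMod 2) (Set.range (C i))) := by
  have hchar : ∀ (i : Fin (m + 1)) (v : Fin (n + 1) → ZMod 2),
      v ∉ Submodule.span (ZMod 2) (Set.range (C i)) ↔
        ∃ w ∈ Bspan φ i, dotProduct v w ≠ 0 := by
    intro i v
    rw [hC]
    push_neg
    rfl
  constructor
  · rintro ⟨a, ha⟩
    refine ⟨Fin.snoc (fun k => if a k then 1 else 0) 1, fun i => ?_⟩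
    set v : Fin (n + 1) → ZMod 2 := Fin.snoc (fun k => if a k then 1 else 0) 1 with hv
    rw [hchar]
    unfold Bspan
    by_cases h : (i : ℕ) < m
    · rw [dif_pos h, exists_row]
      obtain ⟨j, hj⟩ := ha ⟨i, h⟩
      refine ⟨j, ?_⟩
      have : dotProduct v (clauseMatrix (φ ⟨i, h⟩) j)
          = dotProduct v (litRow (φ ⟨i, h⟩ j)) := rfl
      rw [this, dp_litRow]
      have hlast : v (Fin.last n) = 1 := by simp [hv, Fin.snoc_last]
      have hvar : v (φ ⟨i, h⟩ j).var.castSucc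
          = if a (φ ⟨i, h⟩ j).var then 1 else 0 := by simp [hv, Fin.snoc_castSucc]
      rw [hvar, hlast]
      unfold litSat at hj
      cases hav : a (φ ⟨i, h⟩ j).var <;> cases hneg : (φ ⟨i, h⟩ j).neg <;>
        simp_all
    · rw [dif_neg h, exists_row]
      refine ⟨0, ?_⟩
      have : dotProduct v (lastMatrix n 0)
          = v (Fin.last n) := by
        exact dp_indicator v (Fin.last n)
      rw [this]
      simp [hv, Fin.snoc_last]
  · rintro ⟨v, hv⟩
    have hlastmem := (hchar (Fin.last m) v).mp (hv (Fin.last m))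
    have hml : ¬ ((Fin.last m : ℕ) < m) := by simp
    rw [Bspan, dif_neg hml, exists_row] at hlastmem
    obtain ⟨j0, hj0⟩ := hlastmem
    have hvlast : v (Fin.last n) = 1 := by
      rw [← zmod2_ne_zero]
      have : dotProduct v (lastMatrix n j0) = v (Fin.last n) := by
        exact dp_indicator v (Fin.last n)
      rwa [this] at hj0
    refine ⟨fun k => v k.castSucc = 1, fun i => ?_⟩
    have hi := (hchar i.castSucc v).mp (hv i.castSucc)
    have him : ((i.castSucc : Fin (m+1)) : ℕ) < m := by simp [Fin.castSucc_lt_last i]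
    rw [Bspan, dif_pos him, exists_row] at hi
    obtain ⟨j, hj⟩ := hi
    have hii : (⟨((i.castSucc : Fin (m+1)) : ℕ), him⟩ : Fin m) = i := by
      ext; simp
    rw [hii] at hj
    refine ⟨j, ?_⟩
    have hdp : dotProduct v (clauseMatrix (φ i) j)
        = dotProduct v (litRow (φ i j)) := rfl
    rw [hdp, dp_litRow, zmod2_ne_zero, hvlast] at hj
    unfold litSat
    cases hneg : (φ i j).neg <;> rw [hneg] at hj <;> simp at hj ⊢
    · exact hj
    · intro hcon
      rw [hcon] at hj
      revert hj; decide
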